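/- Let X̂ : ℝ^d → ℝ^d, let V : ℝ^d → ℝ be differentiable, let μ > 0, and let x ∈ ℝ^d be a point with V(x) ≥ 0 and ∇V(x) ≠ 0. Define the projected vector field X(x) = X̂(x) − ∇V(x) · ReLU(⟨∇V(x), X̂(x)⟩ + μV(x)) / ‖∇V(x)‖₂², where ReLU(s) = max(s, 0). Then ⟨∇V(x), X(x)⟩ ≤ −μV(x) ≤ 0; i.e., V decreases along the vector field X at x. -/
import Mathlib

open scoped RealInnerProductSpace

/-- Kolter–Manek stable vector field construction: projecting `X̂` along `∇V` makes `V`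
decrease along the resulting vector field `X`:
`⟪∇V(x), X(x)⟫ ≤ -μ V(x) ≤ 0` whenever `V(x) ≥ 0` and `∇V(x) ≠ 0`. -/
theorem kolter_manek_lyapunov_decrease
    {d : ℕ} (Xhat : EuclideanSpace ℝ (Fin d) → EuclideanSpace ℝ (Fin d))
    (V : EuclideanSpace ℝ (Fin d) → ℝ) (μ : ℝ) (hμ : 0 < μ)
    (x : EuclideanSpace ℝ (Fin d)) (g : EuclideanSpace ℝ (Fin d))
    (hg : HasGradientAt V g x) (hV : 0 ≤ V x) (hg0 : g ≠ 0)
    (X : EuclideanSpace ℝ (Fin d))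
    (hX : X = Xhat x - (max (⟪g, Xhat x⟫ + μ * V x) 0 / ‖g‖ ^ 2) • g) :
    ⟪g, X⟫ ≤ -(μ * V x) ∧ -(μ * V x) ≤ 0 := by
  have hgn : ‖g‖ ^ 2 ≠ 0 := pow_ne_zero _ (norm_ne_zero_iff.mpr hg0)
  constructor
  · rw [hX, inner_sub_right, inner_smul_right, real_inner_self_eq_norm_sq,
      div_mul_cancel₀ _ hgn]
    have h := le_max_left (⟪g, Xhat x⟫ + μ * V x) 0
    linarith
  · nlinarith
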